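/- The sequences of associated polynomials of the first kind satisfy the shifted three-term recurrence relations: under the stated orthogonality setup, for every m ≥ 1 and all z ∈ ℂ, z·B^{(1)}_{m-1}(z) = A_m B^{(1)}_m(z) + B_m B^{(1)}_{m-1}(z) + C_m B^{(1)}_{m-2}(z) and z·G^{(1)}_{m-1}(z) = G^{(1)}_{m-2}(z) A_{m-1} + G^{(1)}_{m-1}(z) B_m + G^{(1)}_m(z) C_{m+1}, with B^{(1)}_{-1} = 0, B^{(1)}_0(z) = A_0^{-1} U(P_0), G^{(1)}_{-1} = 0, and G^{(1)}_0(z) = U(P_0) G_0 C_1^{-1}. -/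

import Mathlib

open Polynomial Matrix Finset

noncomputable section

/-- `N × N` matrices with polynomial entries, viewed as matrix polynomials. -/
abbrev MatPoly (N : ℕ) := Matrix (Fin N) (Fin N) (Polynomial ℂ)

/-- Evaluation of a matrix polynomial at a complex number (entrywise evaluation). -/
def evalM {N : ℕ} (Q : MatPoly N) (z : ℂ) : Matrix (Fin N) (Fin N) ℂ :=
  Q.map (Polynomial.eval z)

/-- Composition of a matrix polynomial with a scalar polynomial `h` (entrywise). -/
def compH {N : ℕ} (Q : MatPoly N) (h : Polynomial ℂ) : MatPoly N :=
  Q.map fun p => p.comp h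

/-- The vector polynomial `P₀(x) = [1, x, …, x^{N-1}]ᵀ`. -/
def P0 (N : ℕ) : Fin N → Polynomial ℂ := fun i => Polynomial.X ^ (i : ℕ)

/-- Action of a vector of linear functionals `U` on a vector polynomial `P`:
the matrix with `(i,j)` entry `u^j(p_i)`. -/
def applyU {N : ℕ} (U : Fin N → (Polynomial ℂ →ₗ[ℂ] ℂ)) (P : Fin N → Polynomial ℂ) :
    Matrix (Fin N) (Fin N) ℂ := Matrix.of fun i j => U j (P i)

/-- The vector polynomial `B(x) = V(h(x)) P₀(x)` associated to a matrix polynomial `V`. -/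
def Bvec {N : ℕ} (V : MatPoly N) (h : Polynomial ℂ) : Fin N → Polynomial ℂ :=
  (compH V h).mulVec (P0 N)

/-- `((Qᵀ U)(P))_{i,j} = Σ_s u^s (Q_{s,j} p_i)`. -/
def transApply {N : ℕ} (U : Fin N → (Polynomial ℂ →ₗ[ℂ] ℂ)) (Q : MatPoly N)
    (P : Fin N → Polynomial ℂ) : Matrix (Fin N) (Fin N) ℂ :=
  Matrix.of fun i j => ∑ s, U s (Q s j * P i)

/-- The difference quotient `(p(z) - p(h(x)))/(z - h(x))` as a polynomial in the outer
variable `z` with coefficients polynomials in the inner variable `x`. -/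
def diffQuot (p h : Polynomial ℂ) : Polynomial (Polynomial ℂ) :=
  (p.map (Polynomial.C : ℂ →+* Polynomial ℂ) - Polynomial.C (p.comp h)) /ₘ
    (Polynomial.X - Polynomial.C h)

/-- Apply a linear functional to the (inner-variable) coefficients of a two-variable
polynomial, leaving a polynomial in the outer variable. -/
def applyCoeff (u : Polynomial ℂ →ₗ[ℂ] ℂ) (q : Polynomial (Polynomial ℂ)) : Polynomial ℂ :=
  q.sum fun n a => Polynomial.monomial n (u a)

/-- The first kind associated polynomial built from `W = V_{m+1}`:
`B⁽¹⁾_m(z) = U_x( ((W(z) - W(h(x)))/(z - h(x))) · P₀(x) )`. -/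
def assocB {N : ℕ} (U : Fin N → (Polynomial ℂ →ₗ[ℂ] ℂ)) (W : MatPoly N) (h : Polynomial ℂ) :
    MatPoly N :=
  Matrix.of fun i j =>
    applyCoeff (U j) (∑ s, diffQuot (W i s) h * Polynomial.C (Polynomial.X ^ (s : ℕ)))

/-- The first kind associated polynomial built from `W = G_{m+1}`:
`G⁽¹⁾_m(z) = ( ((W(z) - W(h(x)))ᵀ/(z - h(x))) U_x )(P₀(x))`. -/
def assocG {N : ℕ} (U : Fin N → (Polynomial ℂ →ₗ[ℂ] ℂ)) (W : MatPoly N) (h : Polynomial ℂ) :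
    MatPoly N :=
  Matrix.of fun i j =>
    ∑ s, applyCoeff (U s) (diffQuot (W s j) h * Polynomial.C (Polynomial.X ^ (i : ℕ)))

/-- The shifted sequence of first kind associated polynomials: `B1seq U V h k = B⁽¹⁾_{k-1}`,
with the convention `B⁽¹⁾_{-1} = 0`. -/
def B1seq {N : ℕ} (U : Fin N → (Polynomial ℂ →ₗ[ℂ] ℂ)) (V : ℕ → MatPoly N)
    (h : Polynomial ℂ) : ℕ → MatPoly N :=
  fun k => if k = 0 then 0 else assocB U (V k) h

/-- The shifted sequence `G1seq U G h k = G⁽¹⁾_{k-1}`, with `G⁽¹⁾_{-1} = 0`. -/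
def G1seq {N : ℕ} (U : Fin N → (Polynomial ℂ →ₗ[ℂ] ℂ)) (G : ℕ → MatPoly N)
    (h : Polynomial ℂ) : ℕ → MatPoly N :=
  fun k => if k = 0 then 0 else assocG U (G k) h

/-! ### Auxiliary lemmas -/

section Aux

lemma diffQuot_spec (p h : ℂ[X]) :
    (X - Polynomial.C h) * diffQuot p h = p.map Polynomial.C - Polynomial.C (p.comp h) := by
  have hm : (X - Polynomial.C h).Monic := monic_X_sub_C h
  have hmod : (p.map Polynomial.C - Polynomial.C (p.comp h)) %ₘ (X - Polynomial.C h) = 0 := by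
    rw [Polynomial.modByMonic_X_sub_C_eq_C_eval]
    simp [Polynomial.eval_map, Polynomial.comp]
  have h2 := Polynomial.modByMonic_add_div (p.map Polynomial.C - Polynomial.C (p.comp h)) (X - Polynomial.C h)
  rw [hmod, zero_add] at h2
  exact h2

lemma diffQuot_unique {p h : ℂ[X]} {q : Polynomial ℂ[X]}
    (hq : (X - Polynomial.C h) * q = p.map Polynomial.C - Polynomial.C (p.comp h)) :
    diffQuot p h = q := by
  have hne : (X - Polynomial.C h) ≠ (0 : Polynomial ℂ[X]) := (monic_X_sub_C h).ne_zero
  exact mul_left_cancel₀ hne ((diffQuot_spec p h).trans hq.symm)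

lemma diffQuot_Cc (a : ℂ) (h : ℂ[X]) : diffQuot (Polynomial.C a) h = 0 := by
  apply diffQuot_unique; simp

lemma diffQuot_X (h : ℂ[X]) : diffQuot X h = 1 := by
  apply diffQuot_unique; simp

lemma diffQuot_zero (h : ℂ[X]) : diffQuot 0 h = 0 := by
  simpa using diffQuot_Cc 0 h

lemma diffQuot_add (p q h : ℂ[X]) :
    diffQuot (p + q) h = diffQuot p h + diffQuot q h := by
  apply diffQuot_unique
  rw [mul_add, diffQuot_spec, diffQuot_spec]
  rw [Polynomial.map_add, add_comp, _root_.map_add]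
  ring

lemma diffQuot_C_mul (a : ℂ) (p h : ℂ[X]) :
    diffQuot (Polynomial.C a * p) h = Polynomial.C (Polynomial.C a) * diffQuot p h := by
  apply diffQuot_unique
  rw [mul_left_comm, diffQuot_spec]
  simp [mul_sub, mul_comp]

lemma diffQuot_X_mul (p h : ℂ[X]) :
    diffQuot (X * p) h = X * diffQuot p h + Polynomial.C (p.comp h) := by
  apply diffQuot_unique
  rw [mul_add, mul_left_comm, diffQuot_spec]
  rw [Polynomial.map_mul, map_X, mul_comp, X_comp, _root_.map_mul]
  ring

lemma diffQuot_sum {ι : Type*} [DecidableEq ι] (s : Finset ι) (f : ι → ℂ[X]) (h : ℂ[X]) :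
    diffQuot (∑ i ∈ s, f i) h = ∑ i ∈ s, diffQuot (f i) h := by
  induction s using Finset.induction_on with
  | empty => simpa using diffQuot_Cc 0 h
  | @insert a t hx ih => rw [Finset.sum_insert hx, Finset.sum_insert hx, diffQuot_add, ih]

lemma applyCoeff_coeff (u : ℂ[X] →ₗ[ℂ] ℂ) (q : Polynomial ℂ[X]) (n : ℕ) :
    (applyCoeff u q).coeff n = u (q.coeff n) := by
  unfold applyCoeff Polynomial.sum
  rw [Polynomial.finset_sum_coeff]
  simp only [Polynomial.coeff_monomial]
  rw [Finset.sum_ite_eq' q.support n (fun b => u (q.coeff b))]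
  split_ifs with hmem
  · rfl
  · rw [Polynomial.notMem_support_iff.mp hmem, map_zero]

lemma applyCoeff_add (u : ℂ[X] →ₗ[ℂ] ℂ) (p q : Polynomial ℂ[X]) :
    applyCoeff u (p + q) = applyCoeff u p + applyCoeff u q := by
  ext n; simp [applyCoeff_coeff]

lemma applyCoeff_sub (u : ℂ[X] →ₗ[ℂ] ℂ) (p q : Polynomial ℂ[X]) :
    applyCoeff u (p - q) = applyCoeff u p - applyCoeff u q := by
  ext n; simp [applyCoeff_coeff]

lemma applyCoeff_zero (u : ℂ[X] →ₗ[ℂ] ℂ) : applyCoeff u 0 = 0 := by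
  ext n; simp [applyCoeff_coeff]

lemma applyCoeff_sum {ι : Type*} (u : ℂ[X] →ₗ[ℂ] ℂ) (s : Finset ι) (f : ι → Polynomial ℂ[X]) :
    applyCoeff u (∑ i ∈ s, f i) = ∑ i ∈ s, applyCoeff u (f i) := by
  ext n; simp [applyCoeff_coeff, Polynomial.finset_sum_coeff]

lemma applyCoeff_C (u : ℂ[X] →ₗ[ℂ] ℂ) (b : ℂ[X]) :
    applyCoeff u (Polynomial.C b) = Polynomial.C (u b) := by
  ext n
  rw [applyCoeff_coeff]
  rcases n with _ | n <;> simp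

lemma applyCoeff_X_mul (u : ℂ[X] →ₗ[ℂ] ℂ) (q : Polynomial ℂ[X]) :
    applyCoeff u (X * q) = X * applyCoeff u q := by
  ext n
  rw [applyCoeff_coeff]
  rcases n with _ | n
  · simp [Polynomial.mul_coeff_zero]
  · rw [Polynomial.coeff_X_mul, Polynomial.coeff_X_mul, applyCoeff_coeff]

lemma applyCoeff_CC_mul (u : ℂ[X] →ₗ[ℂ] ℂ) (a : ℂ) (q : Polynomial ℂ[X]) :
    applyCoeff u (Polynomial.C (Polynomial.C a) * q) = Polynomial.C a * applyCoeff u q := by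
  ext n
  rw [applyCoeff_coeff, Polynomial.coeff_C_mul, Polynomial.coeff_C_mul, applyCoeff_coeff,
    ← Polynomial.smul_eq_C_mul]
  simp

lemma Bvec_apply {N : ℕ} (W : MatPoly N) (h : ℂ[X]) (i : Fin N) :
    Bvec W h i = ∑ s, (W i s).comp h * X ^ (s : ℕ) := by
  simp [Bvec, compH, Matrix.mulVec, dotProduct, P0, Matrix.map_apply]

end Aux
section Main

variable {N : ℕ}

lemma diffQuot_mul_C (p : ℂ[X]) (a : ℂ) (h : ℂ[X]) :
    diffQuot (p * Polynomial.C a) h = diffQuot p h * Polynomial.C (Polynomial.C a) := by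
  rw [mul_comm, diffQuot_C_mul, mul_comm]

lemma applyCoeff_mul_CC (u : ℂ[X] →ₗ[ℂ] ℂ) (a : ℂ) (q : Polynomial ℂ[X]) :
    applyCoeff u (q * Polynomial.C (Polynomial.C a)) = Polynomial.C a * applyCoeff u q := by
  rw [mul_comm, applyCoeff_CC_mul]

lemma assocB_apply (U : Fin N → (ℂ[X] →ₗ[ℂ] ℂ)) (W : MatPoly N) (h : ℂ[X]) (i j : Fin N) :
    assocB U W h i j
      = applyCoeff (U j) (∑ s, diffQuot (W i s) h * Polynomial.C (X ^ (s : ℕ))) := rfl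

lemma assocG_apply (U : Fin N → (ℂ[X] →ₗ[ℂ] ℂ)) (W : MatPoly N) (h : ℂ[X]) (i j : Fin N) :
    assocG U W h i j
      = ∑ s, applyCoeff (U s) (diffQuot (W s j) h * Polynomial.C (X ^ (i : ℕ))) := rfl

lemma assocB_lin (U : Fin N → (ℂ[X] →ₗ[ℂ] ℂ)) (h : ℂ[X])
    (W1 W2 W3 Wl : MatPoly N) (a b c : Matrix (Fin N) (Fin N) ℂ)
    (hrec : ∀ i s, X * Wl i s = (∑ t, Polynomial.C (a i t) * W1 t s)
        + (∑ t, Polynomial.C (b i t) * W2 t s) + ∑ t, Polynomial.C (c i t) * W3 t s)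
    (horth : ∀ i j, U j (Bvec Wl h i) = 0) (i j : Fin N) :
    X * assocB U Wl h i j = (∑ t, Polynomial.C (a i t) * assocB U W1 h t j)
        + (∑ t, Polynomial.C (b i t) * assocB U W2 h t j)
        + ∑ t, Polynomial.C (c i t) * assocB U W3 h t j := by
  have key : ∀ s : Fin N, X * diffQuot (Wl i s) h
      = ((∑ t, Polynomial.C (Polynomial.C (a i t)) * diffQuot (W1 t s) h)
        + (∑ t, Polynomial.C (Polynomial.C (b i t)) * diffQuot (W2 t s) h)
        + ∑ t, Polynomial.C (Polynomial.C (c i t)) * diffQuot (W3 t s) h)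
        - Polynomial.C ((Wl i s).comp h) := by
    intro s
    have h1 : X * diffQuot (Wl i s) h + Polynomial.C ((Wl i s).comp h)
        = diffQuot (X * Wl i s) h := (diffQuot_X_mul _ _).symm
    rw [hrec i s, diffQuot_add, diffQuot_add, diffQuot_sum, diffQuot_sum, diffQuot_sum] at h1
    simp only [diffQuot_C_mul] at h1
    rw [eq_sub_iff_add_eq, h1]
  have main : (∑ s, (X * diffQuot (Wl i s) h) * Polynomial.C (X ^ (s : ℕ)))
      = ((∑ t, Polynomial.C (Polynomial.C (a i t))
            * ∑ s, diffQuot (W1 t s) h * Polynomial.C (X ^ (s : ℕ)))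
        + (∑ t, Polynomial.C (Polynomial.C (b i t))
            * ∑ s, diffQuot (W2 t s) h * Polynomial.C (X ^ (s : ℕ)))
        + ∑ t, Polynomial.C (Polynomial.C (c i t))
            * ∑ s, diffQuot (W3 t s) h * Polynomial.C (X ^ (s : ℕ)))
        - Polynomial.C (∑ s, (Wl i s).comp h * X ^ (s : ℕ)) := by
    simp only [key, sub_mul, add_mul, Finset.sum_mul, Finset.mul_sum, mul_assoc,
      Finset.sum_sub_distrib, Finset.sum_add_distrib, map_sum, ← Polynomial.C_mul]
    refine congrArg₂ _ (congrArg₂ _ (congrArg₂ _ Finset.sum_comm Finset.sum_comm) Finset.sum_comm) rfl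
  calc X * assocB U Wl h i j
      = applyCoeff (U j) (∑ s, (X * diffQuot (Wl i s) h) * Polynomial.C (X ^ (s : ℕ))) := by
        rw [assocB_apply, ← applyCoeff_X_mul, Finset.mul_sum]
        simp only [mul_assoc]
    _ = _ := by
        rw [main, applyCoeff_sub, applyCoeff_add, applyCoeff_add, applyCoeff_sum,
          applyCoeff_sum, applyCoeff_sum, applyCoeff_C]
        simp only [applyCoeff_CC_mul]
        rw [← Bvec_apply Wl h i, horth i j, map_zero, sub_zero]
        rfl

lemma assocG_lin (U : Fin N → (ℂ[X] →ₗ[ℂ] ℂ)) (h : ℂ[X])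
    (W1 W2 W3 Wl : MatPoly N) (a b c : Matrix (Fin N) (Fin N) ℂ)
    (hrec : ∀ s j, X * Wl s j = (∑ t, W1 s t * Polynomial.C (a t j))
        + (∑ t, W2 s t * Polynomial.C (b t j)) + ∑ t, W3 s t * Polynomial.C (c t j))
    (horth : ∀ (i j : Fin N), ∑ s, U s ((Wl s j).comp h * X ^ (i : ℕ)) = 0) (i j : Fin N) :
    X * assocG U Wl h i j = (∑ t, assocG U W1 h i t * Polynomial.C (a t j))
        + (∑ t, assocG U W2 h i t * Polynomial.C (b t j))
        + ∑ t, assocG U W3 h i t * Polynomial.C (c t j) := by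
  have key : ∀ s : Fin N, X * diffQuot (Wl s j) h
      = ((∑ t, diffQuot (W1 s t) h * Polynomial.C (Polynomial.C (a t j)))
        + (∑ t, diffQuot (W2 s t) h * Polynomial.C (Polynomial.C (b t j)))
        + ∑ t, diffQuot (W3 s t) h * Polynomial.C (Polynomial.C (c t j)))
        - Polynomial.C ((Wl s j).comp h) := by
    intro s
    have h1 : X * diffQuot (Wl s j) h + Polynomial.C ((Wl s j).comp h)
        = diffQuot (X * Wl s j) h := (diffQuot_X_mul _ _).symm
    rw [hrec s j, diffQuot_add, diffQuot_add, diffQuot_sum, diffQuot_sum, diffQuot_sum] at h1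
    simp only [diffQuot_mul_C] at h1
    rw [eq_sub_iff_add_eq, h1]
  have main : ∀ s : Fin N,
      applyCoeff (U s) ((X * diffQuot (Wl s j) h) * Polynomial.C (X ^ (i : ℕ)))
      = ((∑ t, Polynomial.C (a t j)
            * applyCoeff (U s) (diffQuot (W1 s t) h * Polynomial.C (X ^ (i : ℕ))))
        + (∑ t, Polynomial.C (b t j)
            * applyCoeff (U s) (diffQuot (W2 s t) h * Polynomial.C (X ^ (i : ℕ))))
        + ∑ t, Polynomial.C (c t j)
            * applyCoeff (U s) (diffQuot (W3 s t) h * Polynomial.C (X ^ (i : ℕ))))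
        - Polynomial.C (U s ((Wl s j).comp h * X ^ (i : ℕ))) := by
    intro s
    rw [key s, sub_mul, applyCoeff_sub]
    congr 1
    · simp only [add_mul, Finset.sum_mul, applyCoeff_add, applyCoeff_sum, mul_right_comm,
        applyCoeff_mul_CC]
    · rw [← Polynomial.C_mul, applyCoeff_C]
  calc X * assocG U Wl h i j
      = ∑ s, applyCoeff (U s) ((X * diffQuot (Wl s j) h) * Polynomial.C (X ^ (i : ℕ))) := by
        rw [assocG_apply, Finset.mul_sum]
        simp only [← applyCoeff_X_mul, ← mul_assoc]
    _ = _ := by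
        simp only [main]
        rw [Finset.sum_sub_distrib, Finset.sum_add_distrib, Finset.sum_add_distrib,
          ← map_sum, horth i j, map_zero, sub_zero]
        congr 1
        congr 1
        · rw [Finset.sum_comm]
          refine Finset.sum_congr rfl fun t _ => ?_
          rw [← Finset.mul_sum, mul_comm, assocG_apply]
        · rw [Finset.sum_comm]
          refine Finset.sum_congr rfl fun t _ => ?_
          rw [← Finset.mul_sum, mul_comm, assocG_apply]
        · rw [Finset.sum_comm]
          refine Finset.sum_congr rfl fun t _ => ?_
          rw [← Finset.mul_sum, mul_comm, assocG_apply]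

end Main
section Conv

variable {N : ℕ}

lemma evalM_entry_rec {M1 M2 M3 Ml : MatPoly N} {a b c : Matrix (Fin N) (Fin N) ℂ}
    (heval : ∀ z : ℂ, z • evalM Ml z = a * evalM M1 z + b * evalM M2 z + c * evalM M3 z)
    (i s : Fin N) :
    X * Ml i s = (∑ t, Polynomial.C (a i t) * M1 t s)
      + (∑ t, Polynomial.C (b i t) * M2 t s) + ∑ t, Polynomial.C (c i t) * M3 t s := by
  apply Polynomial.funext; intro z
  have h1 := congrFun (congrFun (heval z) i) s
  simp only [evalM, Matrix.smul_apply, Matrix.add_apply, Matrix.mul_apply, Matrix.map_apply,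
    smul_eq_mul] at h1
  simp only [eval_mul, eval_X, Polynomial.eval_finset_sum, eval_add, eval_C]
  exact h1

lemma evalM_entry_rec' {M1 M2 M3 Ml : MatPoly N} {a b c : Matrix (Fin N) (Fin N) ℂ}
    (heval : ∀ z : ℂ, z • evalM Ml z = evalM M1 z * a + evalM M2 z * b + evalM M3 z * c)
    (s j : Fin N) :
    X * Ml s j = (∑ t, M1 s t * Polynomial.C (a t j))
      + (∑ t, M2 s t * Polynomial.C (b t j)) + ∑ t, M3 s t * Polynomial.C (c t j) := by
  apply Polynomial.funext; intro z
  have h1 := congrFun (congrFun (heval z) s) j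
  simp only [evalM, Matrix.smul_apply, Matrix.add_apply, Matrix.mul_apply, Matrix.map_apply,
    smul_eq_mul] at h1
  simp only [eval_mul, eval_X, Polynomial.eval_finset_sum, eval_add, eval_C]
  exact h1

lemma evalM_entry_rec2 {M1 M2 Ml : MatPoly N} {a b : Matrix (Fin N) (Fin N) ℂ}
    (heval : ∀ z : ℂ, z • evalM Ml z = a * evalM M1 z + b * evalM M2 z)
    (i s : Fin N) :
    X * Ml i s = (∑ t, Polynomial.C (a i t) * M1 t s)
      + ∑ t, Polynomial.C (b i t) * M2 t s := by
  apply Polynomial.funext; intro z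
  have h1 := congrFun (congrFun (heval z) i) s
  simp only [evalM, Matrix.smul_apply, Matrix.add_apply, Matrix.mul_apply, Matrix.map_apply,
    smul_eq_mul] at h1
  simp only [eval_mul, eval_X, Polynomial.eval_finset_sum, eval_add, eval_C]
  exact h1

lemma evalM_entry_rec2' {M1 M2 Ml : MatPoly N} {a b : Matrix (Fin N) (Fin N) ℂ}
    (heval : ∀ z : ℂ, z • evalM Ml z = evalM M1 z * a + evalM M2 z * b)
    (s j : Fin N) :
    X * Ml s j = (∑ t, M1 s t * Polynomial.C (a t j))
      + ∑ t, M2 s t * Polynomial.C (b t j) := by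
  apply Polynomial.funext; intro z
  have h1 := congrFun (congrFun (heval z) s) j
  simp only [evalM, Matrix.smul_apply, Matrix.add_apply, Matrix.mul_apply, Matrix.map_apply,
    smul_eq_mul] at h1
  simp only [eval_mul, eval_X, Polynomial.eval_finset_sum, eval_add, eval_C]
  exact h1

lemma diffQuot_one_entry (h : ℂ[X]) (i s : Fin N) :
    diffQuot ((1 : MatPoly N) i s) h = 0 := by
  rw [Matrix.one_apply]
  split_ifs
  · simpa using diffQuot_Cc 1 h
  · exact diffQuot_zero h

lemma assocB_one (U : Fin N → (ℂ[X] →ₗ[ℂ] ℂ)) (h : ℂ[X]) :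
    assocB U (1 : MatPoly N) h = 0 := by
  ext i j
  rw [assocB_apply]
  simp [diffQuot_one_entry, applyCoeff_zero]

lemma assocG_const (U : Fin N → (ℂ[X] →ₗ[ℂ] ℂ)) (h : ℂ[X]) (g : Matrix (Fin N) (Fin N) ℂ) :
    assocG U (g.map fun a => Polynomial.C a) h = 0 := by
  ext i j
  rw [assocG_apply]
  simp [Matrix.map_apply, diffQuot_Cc, applyCoeff_zero]

end Conv
section BaseCases

variable {N : ℕ}

/-- The composite ring hom `ℂ →+* ℂ[X][X]`. -/
def CCh : ℂ →+* Polynomial ℂ[X] :=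
  (Polynomial.C : ℂ[X] →+* Polynomial ℂ[X]).comp (Polynomial.C : ℂ →+* ℂ[X])

lemma CCh_apply (a : ℂ) : CCh a = Polynomial.C (Polynomial.C a) := rfl

lemma baseB (U : Fin N → (ℂ[X] →ₗ[ℂ] ℂ)) (h : ℂ[X]) (V1 : MatPoly N)
    (A0 B0 : Matrix (Fin N) (Fin N) ℂ) (hA0 : IsUnit A0)
    (hrec : ∀ i s : Fin N, X * (1 : MatPoly N) i s
      = (∑ t, Polynomial.C (A0 i t) * V1 t s)
        + ∑ t, Polynomial.C (B0 i t) * (1 : MatPoly N) t s) :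
    assocB U V1 h = (A0⁻¹ * applyU U (P0 N)).map (fun a => Polynomial.C a) := by
  have hdet : IsUnit A0.det := (Matrix.isUnit_iff_isUnit_det A0).mp hA0
  have hM : (A0.map CCh) * (Matrix.of fun t s => diffQuot (V1 t s) h) = 1 := by
    refine Matrix.ext fun i s => ?_
    have h2 := congrArg (fun p => diffQuot p h) (hrec i s)
    rw [diffQuot_add, diffQuot_sum, diffQuot_sum] at h2
    simp only [diffQuot_C_mul, diffQuot_one_entry, mul_zero, Finset.sum_const_zero,
      add_zero] at h2
    have h3 : diffQuot (X * (1 : MatPoly N) i s) h = if i = s then 1 else 0 := by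
      rw [Matrix.one_apply, mul_ite, mul_one, mul_zero]
      split_ifs
      · exact diffQuot_X h
      · exact diffQuot_zero h
    rw [h3] at h2
    rw [Matrix.mul_apply, Matrix.one_apply]
    simp only [Matrix.map_apply, CCh_apply, Matrix.of_apply]
    exact h2.symm
  have hinv : ((A0⁻¹).map CCh) * (A0.map CCh) = 1 := by
    rw [← Matrix.map_mul, Matrix.nonsing_inv_mul A0 hdet,
      Matrix.map_one CCh (map_zero CCh) (map_one CCh)]
  have hM2 : (Matrix.of fun t s => diffQuot (V1 t s) h) = (A0⁻¹).map CCh := by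
    calc (Matrix.of fun t s => diffQuot (V1 t s) h)
        = (((A0⁻¹).map CCh) * (A0.map CCh)) * (Matrix.of fun t s => diffQuot (V1 t s) h) := by
          rw [hinv, one_mul]
      _ = ((A0⁻¹).map CCh) * ((A0.map CCh) * (Matrix.of fun t s => diffQuot (V1 t s) h)) :=
          Matrix.mul_assoc _ _ _
      _ = (A0⁻¹).map CCh := by rw [hM, mul_one]
  have hD : ∀ t s, diffQuot (V1 t s) h = Polynomial.C (Polynomial.C (A0⁻¹ t s)) := by
    intro t s
    have := congrFun (congrFun hM2 t) s
    simpa [Matrix.map_apply, CCh_apply, Matrix.of_apply] using this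
  refine Matrix.ext fun i j => ?_
  rw [Matrix.map_apply, Matrix.mul_apply, assocB_apply]
  simp only [hD]
  have hsum : (∑ s : Fin N, Polynomial.C (Polynomial.C (A0⁻¹ i s)) * Polynomial.C (X ^ (s : ℕ)))
      = Polynomial.C (∑ s : Fin N, Polynomial.C (A0⁻¹ i s) * X ^ (s : ℕ)) := by
    simp [map_sum, ← Polynomial.C_mul]
  rw [hsum, applyCoeff_C, map_sum, Polynomial.C_inj]
  refine Finset.sum_congr rfl fun s _ => ?_
  rw [← Polynomial.smul_eq_C_mul, _root_.map_smul, smul_eq_mul]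
  simp [applyU, P0]

lemma baseG (U : Fin N → (ℂ[X] →ₗ[ℂ] ℂ)) (h : ℂ[X]) (G1 : MatPoly N)
    (g0 B0 C1 : Matrix (Fin N) (Fin N) ℂ) (hC1 : IsUnit C1)
    (hrec : ∀ s j : Fin N, X * (g0.map fun a => Polynomial.C a) s j
      = (∑ t, (g0.map fun a => Polynomial.C a) s t * Polynomial.C (B0 t j))
        + ∑ t, G1 s t * Polynomial.C (C1 t j)) :
    assocG U G1 h = (applyU U (P0 N) * g0 * C1⁻¹).map (fun a => Polynomial.C a) := by
  have hdet : IsUnit C1.det := (Matrix.isUnit_iff_isUnit_det C1).mp hC1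
  have hM : (Matrix.of fun s t => diffQuot (G1 s t) h) * (C1.map CCh) = g0.map CCh := by
    refine Matrix.ext fun s j => ?_
    have h2 := congrArg (fun p => diffQuot p h) (hrec s j)
    rw [diffQuot_add, diffQuot_sum, diffQuot_sum] at h2
    have hz : ∀ t, diffQuot ((g0.map fun a => Polynomial.C a) s t * Polynomial.C (B0 t j)) h
        = 0 := by
      intro t
      rw [Matrix.map_apply, ← Polynomial.C_mul, diffQuot_Cc]
    simp only [hz, Finset.sum_const_zero, zero_add, diffQuot_mul_C] at h2
    have h3 : diffQuot (X * (g0.map fun a => Polynomial.C a) s j) h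
        = Polynomial.C (Polynomial.C (g0 s j)) := by
      rw [Matrix.map_apply, diffQuot_X_mul, diffQuot_Cc, mul_zero, zero_add, C_comp]
    rw [h3] at h2
    rw [Matrix.mul_apply, Matrix.map_apply, CCh_apply]
    simp only [Matrix.map_apply, CCh_apply, Matrix.of_apply]
    exact h2.symm
  have hinv : (C1.map CCh) * ((C1⁻¹).map CCh) = 1 := by
    rw [← Matrix.map_mul, Matrix.mul_nonsing_inv C1 hdet,
      Matrix.map_one CCh (map_zero CCh) (map_one CCh)]
  have hM2 : (Matrix.of fun s t => diffQuot (G1 s t) h) = (g0 * C1⁻¹).map CCh := by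
    calc (Matrix.of fun s t => diffQuot (G1 s t) h)
        = (Matrix.of fun s t => diffQuot (G1 s t) h) * ((C1.map CCh) * ((C1⁻¹).map CCh)) := by
          rw [hinv, mul_one]
      _ = ((Matrix.of fun s t => diffQuot (G1 s t) h) * (C1.map CCh)) * ((C1⁻¹).map CCh) :=
          (Matrix.mul_assoc _ _ _).symm
      _ = (g0.map CCh) * ((C1⁻¹).map CCh) := by rw [hM]
      _ = (g0 * C1⁻¹).map CCh := (Matrix.map_mul).symm
  have hD : ∀ s j, diffQuot (G1 s j) h = Polynomial.C (Polynomial.C ((g0 * C1⁻¹) s j)) := by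
    intro s j
    have := congrFun (congrFun hM2 s) j
    simpa [Matrix.map_apply, CCh_apply, Matrix.of_apply] using this
  refine Matrix.ext fun i j => ?_
  rw [Matrix.map_apply, Matrix.mul_assoc, Matrix.mul_apply, assocG_apply,
    map_sum (Polynomial.C : ℂ →+* ℂ[X]) (fun s => applyU U (P0 N) i s * (g0 * C1⁻¹) s j)
      Finset.univ]
  refine Finset.sum_congr rfl fun s _ => ?_
  rw [hD s j, ← Polynomial.C_mul, applyCoeff_C, ← Polynomial.smul_eq_C_mul, _root_.map_smul,
    smul_eq_mul]
  simp [applyU, P0, mul_comm]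

end BaseCases
/-- **Shifted three-term recurrences for the associated polynomials of the first kind.**
Under the orthogonality setup for the vector of linear functionals `U`, the sequences
`B⁽¹⁾` and `G⁽¹⁾` satisfy (for `m ≥ 1`, with `B⁽¹⁾_{-1} = G⁽¹⁾_{-1} = 0`)
`z B⁽¹⁾_{m-1}(z) = A_m B⁽¹⁾_m(z) + B_m B⁽¹⁾_{m-1}(z) + C_m B⁽¹⁾_{m-2}(z)` and
`z G⁽¹⁾_{m-1}(z) = G⁽¹⁾_{m-2}(z) A_{m-1} + G⁽¹⁾_{m-1}(z) B_m + G⁽¹⁾_m(z) C_{m+1}`,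
with `B⁽¹⁾_0 = A₀⁻¹ U(P₀)` and `G⁽¹⁾_0 = U(P₀) G₀ C₁⁻¹`. -/
theorem assoc_first_kind_recurrence
    (N : ℕ) (hN : 1 ≤ N)
    (U : Fin N → (Polynomial ℂ →ₗ[ℂ] ℂ))
    (h : Polynomial ℂ) (hdeg : h.natDegree = N)
    (A B C : ℕ → Matrix (Fin N) (Fin N) ℂ)
    (hA : ∀ m, IsUnit (A m)) (hC : ∀ m, IsUnit (C m))
    (V G : ℕ → MatPoly N)
    (hV0I : V 0 = 1)
    (g0 : Matrix (Fin N) (Fin N) ℂ) (hg0 : IsUnit g0)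
    (hG0c : G 0 = g0.map fun a => Polynomial.C a)
    (hVrec0 : ∀ z : ℂ, z • evalM (V 0) z = A 0 * evalM (V 1) z + B 0 * evalM (V 0) z)
    (hVrec : ∀ (m : ℕ) (z : ℂ), z • evalM (V (m + 1)) z =
      A (m + 1) * evalM (V (m + 2)) z + B (m + 1) * evalM (V (m + 1)) z +
        C (m + 1) * evalM (V m) z)
    (hGrec0 : ∀ z : ℂ, z • evalM (G 0) z = evalM (G 0) z * B 0 + evalM (G 1) z * C 1)
    (hGrec : ∀ (m : ℕ) (z : ℂ), z • evalM (G (m + 1)) z =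
      evalM (G m) z * A m + evalM (G (m + 1)) z * B (m + 1) +
        evalM (G (m + 2)) z * C (m + 2))
    (hleft : ∀ m, ∀ k < m, applyU U (fun i => h ^ k * Bvec (V m) h i) = 0)
    (hright : ∀ m, ∀ j < m,
      transApply U (compH (G m) h) (fun i => h ^ j * P0 N i) = 0) :
    (∀ (n : ℕ) (z : ℂ), z • evalM (B1seq U V h (n + 1)) z =
        A (n + 1) * evalM (B1seq U V h (n + 2)) z
          + B (n + 1) * evalM (B1seq U V h (n + 1)) z
          + C (n + 1) * evalM (B1seq U V h n) z)
    ∧ (∀ (n : ℕ) (z : ℂ), z • evalM (G1seq U G h (n + 1)) z =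
        evalM (G1seq U G h n) z * A n
          + evalM (G1seq U G h (n + 1)) z * B (n + 1)
          + evalM (G1seq U G h (n + 2)) z * C (n + 2))
    ∧ B1seq U V h 1 = ((A 0)⁻¹ * applyU U (P0 N)).map (fun a => Polynomial.C a)
    ∧ G1seq U G h 1 = (applyU U (P0 N) * g0 * (C 1)⁻¹).map (fun a => Polynomial.C a) := by
  have hB1 : ∀ k, B1seq U V h k = assocB U (V k) h := by
    intro k
    cases k with
    | zero => simp [B1seq, hV0I, assocB_one]
    | succ n => simp [B1seq]
  have hG1 : ∀ k, G1seq U G h k = assocG U (G k) h := by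
    intro k
    cases k with
    | zero => simp [G1seq, hG0c, assocG_const]
    | succ n => simp [G1seq]
  refine ⟨?_, ?_, ?_, ?_⟩
  · intro n z
    have horth : ∀ i j, U j (Bvec (V (n + 1)) h i) = 0 := by
      intro i j
      have h0 := hleft (n + 1) 0 (Nat.succ_pos n)
      have h1 := congrFun (congrFun h0 i) j
      simpa [applyU, pow_zero, one_mul] using h1
    have key := assocB_lin U h (V (n + 2)) (V (n + 1)) (V n) (V (n + 1))
      (A (n + 1)) (B (n + 1)) (C (n + 1)) (evalM_entry_rec (hVrec n)) horth
    simp only [hB1]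
    refine Matrix.ext fun i j => ?_
    have hz := congrArg (Polynomial.eval z) (key i j)
    simp only [eval_mul, eval_X, Polynomial.eval_finset_sum, eval_add, eval_C] at hz
    simp only [evalM, Matrix.smul_apply, Matrix.add_apply, Matrix.mul_apply,
      Matrix.map_apply, smul_eq_mul]
    exact hz
  · intro n z
    have horth : ∀ (i j : Fin N), ∑ s, U s (((G (n + 1)) s j).comp h * X ^ (i : ℕ)) = 0 := by
      intro i j
      have h0 := hright (n + 1) 0 (Nat.succ_pos n)
      have h1 := congrFun (congrFun h0 i) j
      simpa [transApply, compH, Matrix.map_apply, P0, pow_zero, one_mul] using h1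
    have key := assocG_lin U h (G n) (G (n + 1)) (G (n + 2)) (G (n + 1))
      (A n) (B (n + 1)) (C (n + 2)) (evalM_entry_rec' (hGrec n)) horth
    simp only [hG1]
    refine Matrix.ext fun i j => ?_
    have hz := congrArg (Polynomial.eval z) (key i j)
    simp only [eval_mul, eval_X, Polynomial.eval_finset_sum, eval_add, eval_C] at hz
    simp only [evalM, Matrix.smul_apply, Matrix.add_apply, Matrix.mul_apply,
      Matrix.map_apply, smul_eq_mul]
    exact hz
  · have hrec : ∀ i s : Fin N, X * (1 : MatPoly N) i s
        = (∑ t, Polynomial.C (A 0 i t) * (V 1) t s)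
          + ∑ t, Polynomial.C (B 0 i t) * (1 : MatPoly N) t s := by
      intro i s
      have h1 := evalM_entry_rec2 hVrec0 i s
      rwa [hV0I] at h1
    rw [hB1 1]
    exact baseB U h (V 1) (A 0) (B 0) (hA 0) hrec
  · have hrec : ∀ s j : Fin N, X * (g0.map fun a => Polynomial.C a) s j
        = (∑ t, (g0.map fun a => Polynomial.C a) s t * Polynomial.C (B 0 t j))
          + ∑ t, (G 1) s t * Polynomial.C (C 1 t j) := by
      intro s j
      have h1 := evalM_entry_rec2' hGrec0 s j
      rwa [hG0c] at h1
    rw [hG1 1]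
    exact baseG U h (G 1) g0 (B 0) (C 1) (hC 1) hrec

end
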